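/- Let 𝒞 be a class of Baire spaces and let f : C → X be a quasicontinuous map from a non-empty space C ∈ 𝒞 to a 𝒞-Piotrowski regular space X. Then: (1) if 𝒞 is closed under open subspaces, the set C(f) of continuity points of f is dense in C; (2) if 𝒞 is closed under dense G_δ-subspaces, then C(f) is not meager in C; (3) if 𝒞 is closed under open subspaces and dense G_δ-subspaces, then C(f) is a dense Baire subspace of C; (4) if 𝒞 is closed under open subspaces and dense Baire subspaces, then C(f) is comeager in C. -/

import Mathlib

open Topology Set

universe u v

/-- `f` is quasicontinuous at `x`. -/
def QuasiContinuousAt {X : Type*} {Y : Type*} [TopologicalSpace X] [TopologicalSpace Y]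
    (f : X → Y) (x : X) : Prop :=
  ∀ Ox ∈ nhds x, ∀ Oy ∈ nhds (f x),
    ∃ U : Set X, IsOpen U ∧ U.Nonempty ∧ U ⊆ Ox ∧ f '' U ⊆ Oy

/-- `f` is quasicontinuous. -/
def QuasiContinuous {X Y : Type*} [TopologicalSpace X] [TopologicalSpace Y] (f : X → Y) : Prop :=
  ∀ x, QuasiContinuousAt f x

/-- The set of continuity points of a map. -/
def ContinuityPoints {Z X : Type*} [TopologicalSpace Z] [TopologicalSpace X] (f : Z → X) :
    Set Z :=
  {z | ContinuousAt f z}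

/-- A multivalued map (represented as `Φ : Z → Set X`) is usco if it has nonempty compact
values and is upper semicontinuous. -/
def IsUsco {Z X : Type*} [TopologicalSpace Z] [TopologicalSpace X] (Φ : Z → Set X) : Prop :=
  (∀ z, (Φ z).Nonempty) ∧ (∀ z, IsCompact (Φ z)) ∧
    ∀ U : Set X, IsOpen U → IsOpen {z | Φ z ⊆ U}

/-- A minimal usco map. -/
def IsMinimalUsco {Z X : Type*} [TopologicalSpace Z] [TopologicalSpace X] (Φ : Z → Set X) :
    Prop :=
  IsUsco Φ ∧ ∀ Ψ : Z → Set X, IsUsco Ψ → (∀ z, Ψ z ⊆ Φ z) → Ψ = Φ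

/-- `Φ` is single-valued at `z`. -/
def SingleValuedAt {Z X : Type*} (Φ : Z → Set X) (z : Z) : Prop := ∃ x, Φ z = {x}

/-- A class of topological spaces (in universe `u`). -/
def SpaceClass : Type (u + 1) := ∀ Z : Type u, TopologicalSpace Z → Prop

/-- All members of the class are Baire spaces. -/
def IsBaireClass (P : SpaceClass.{u}) : Prop :=
  ∀ (Z : Type u) [tZ : TopologicalSpace Z], P Z tZ → BaireSpace Z

/-- The class is closed under taking open subspaces. -/
def ClosedUnderOpenSubspaces (P : SpaceClass.{u}) : Prop :=
  ∀ (Z : Type u) [tZ : TopologicalSpace Z], P Z tZ →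
    ∀ U : Set Z, IsOpen U → P ↥U inferInstance

/-- The class is closed under taking dense `Gδ`-subspaces. -/
def ClosedUnderDenseGdelta (P : SpaceClass.{u}) : Prop :=
  ∀ (Z : Type u) [tZ : TopologicalSpace Z], P Z tZ →
    ∀ S : Set Z, Dense S → IsGδ S → P ↥S inferInstance

/-- The class is closed under taking dense Baire subspaces. -/
def ClosedUnderDenseBaire (P : SpaceClass.{u}) : Prop :=
  ∀ (Z : Type u) [tZ : TopologicalSpace Z], P Z tZ →
    ∀ S : Set Z, Dense S → BaireSpace ↥S → P ↥S inferInstance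

/-- `X` is `𝒞`-Piotrowski: every quasicontinuous map from a nonempty member of the class `𝒞`
to `X` has a continuity point. -/
def IsPiotrowskiFor (P : SpaceClass.{u}) (X : Type v) [TopologicalSpace X] : Prop :=
  ∀ (Z : Type u) [tZ : TopologicalSpace Z], P Z tZ → Nonempty Z →
    ∀ f : Z → X, QuasiContinuous f → ∃ z, ContinuousAt f z

/-- `X` is strong `𝒞`-Piotrowski: for every quasicontinuous map from a member of `𝒞` to `X`
the set of continuity points is comeager. -/
def IsStrongPiotrowskiFor (P : SpaceClass.{u}) (X : Type v) [TopologicalSpace X] : Prop :=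
  ∀ (Z : Type u) [tZ : TopologicalSpace Z], P Z tZ →
    ∀ f : Z → X, QuasiContinuous f → ContinuityPoints f ∈ residual Z

/-- `X` is `𝒞`-Stegall. -/
def IsStegallFor (P : SpaceClass.{u}) (X : Type v) [TopologicalSpace X] : Prop :=
  ∀ (Z : Type u) [tZ : TopologicalSpace Z], P Z tZ → Nonempty Z →
    ∀ Φ : Z → Set X, IsMinimalUsco Φ → ∃ z, SingleValuedAt Φ z

/-- `X` is strong `𝒞`-Stegall. -/
def IsStrongStegallFor (P : SpaceClass.{u}) (X : Type v) [TopologicalSpace X] : Prop :=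
  ∀ (Z : Type u) [tZ : TopologicalSpace Z], P Z tZ →
    ∀ Φ : Z → Set X, IsMinimalUsco Φ → {z | SingleValuedAt Φ z} ∈ residual Z

/-- The class of all Baire spaces (in universe `u`). -/
def BaireClass : SpaceClass.{u} := fun Z tZ => @BaireSpace Z tZ

/-- `X` is Piotrowski. -/
def IsPiotrowski (X : Type v) [TopologicalSpace X] : Prop :=
  IsPiotrowskiFor BaireClass.{u} X

/-- `d` is a metric on `X` (not necessarily related to the topology of `X`). -/
structure IsMetric {X : Type*} (d : X → X → ℝ) : Prop where
  self : ∀ x, d x x = 0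
  eq_of : ∀ x y, d x y = 0 → x = y
  symm : ∀ x y, d x y = d y x
  triangle : ∀ x y z, d x z ≤ d x y + d y z

/-- `X` is fragmented by `d`: every nonempty subset has a nonempty relatively open subset of
`d`-diameter `< ε`. -/
def FragmentedBy (X : Type*) [TopologicalSpace X] (d : X → X → ℝ) : Prop :=
  ∀ ε : ℝ, 0 < ε → ∀ A : Set X, A.Nonempty →
    ∃ V : Set X, IsOpen V ∧ (A ∩ V).Nonempty ∧ ∀ x ∈ A ∩ V, ∀ y ∈ A ∩ V, d x y < ε

/-- The topology generated by `d` is finer than the topology of `X`. -/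
def MetricTopFiner (X : Type*) [TopologicalSpace X] (d : X → X → ℝ) : Prop :=
  ∀ U : Set X, IsOpen U → ∀ x ∈ U, ∃ ε : ℝ, 0 < ε ∧ {y | d x y < ε} ⊆ U

/-- `X` is fragmentable. -/
def Fragmentable (X : Type*) [TopologicalSpace X] : Prop :=
  ∃ d : X → X → ℝ, IsMetric d ∧ FragmentedBy X d

/-- `X` is strictly fragmented by the metric `d`. -/
def StrictlyFragmentedBy (X : Type*) [TopologicalSpace X] (d : X → X → ℝ) : Prop :=
  IsMetric d ∧ FragmentedBy X d ∧ MetricTopFiner X d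

/-- `X` is strictly fragmentable. -/
def StrictlyFragmentable (X : Type*) [TopologicalSpace X] : Prop :=
  ∃ d : X → X → ℝ, StrictlyFragmentedBy X d

/-- The countable family `𝒰` separates the points of `S` from the points of `Sᶜ`:
some member of the family contains exactly one point of any pair `x ∈ S`, `y ∉ S`. -/
def SeparatesFrom {K : Type*} (𝒰 : ℕ → Set K) (S : Set K) : Prop :=
  ∀ x ∈ S, ∀ y ∈ Sᶜ, ∃ n, (x ∈ 𝒰 n ∧ y ∉ 𝒰 n) ∨ (x ∉ 𝒰 n ∧ y ∈ 𝒰 n)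

/-- `X` has countable separation: some compactification `K` of `X` carries a countable family
of open sets separating the points of (the copy of) `X` from the points of `K \ X`. -/
def HasCountableSeparation (X : Type u) [TopologicalSpace X] : Prop :=
  ∃ (K : Type u) (tK : TopologicalSpace K), @CompactSpace K tK ∧ @T2Space K tK ∧
    ∃ e : X → K, @Topology.IsEmbedding X K _ tK e ∧ @DenseRange K tK X e ∧
      ∃ 𝒰 : ℕ → Set K, (∀ n, @IsOpen K tK (𝒰 n)) ∧ SeparatesFrom 𝒰 (Set.range e)

section Helpers

variable {Z X : Type*} [TopologicalSpace Z] [TopologicalSpace X]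


variable {Z X : Type*} [TopologicalSpace Z] [TopologicalSpace X]

lemma qc_restrict (f : Z → X) (hf : QuasiContinuous f) {O S : Set Z}
    (hO : IsOpen O) (hSO : S ⊆ O) (hd : O ⊆ closure S) :
    QuasiContinuous (fun s : S => f ↑s) := by
  intro z Ox hOx Oy hOy
  obtain ⟨V, hV, hVsub⟩ := (mem_nhds_subtype S z Ox).1 hOx
  have hVO : V ∩ O ∈ 𝓝 (z : Z) := Filter.inter_mem hV (hO.mem_nhds (hSO z.2))
  obtain ⟨U, hUo, hUne, hUsub, hUim⟩ := hf z (V ∩ O) hVO Oy hOy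
  obtain ⟨u, hu⟩ := hUne
  have huS : (U ∩ S).Nonempty := by
    have : u ∈ closure S := hd (hUsub hu).2
    exact mem_closure_iff.1 this U hUo hu
  obtain ⟨s, hsU, hsS⟩ := huS
  refine ⟨Subtype.val ⁻¹' U, hUo.preimage continuous_subtype_val, ⟨⟨s, hsS⟩, hsU⟩, ?_, ?_⟩
  · intro a ha; exact hVsub (hUsub ha).1
  · rintro x ⟨a, ha, rfl⟩; exact hUim ⟨a, ha, rfl⟩

lemma continuousAt_of_restrict [RegularSpace X] (f : Z → X) (hf : QuasiContinuous f)
    {O S : Set Z} (hO : IsOpen O) (hSO : S ⊆ O) (hd : O ⊆ closure S)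
    (z : S) (hz : ContinuousAt (fun s : S => f ↑s) z) : ContinuousAt f ↑z := by
  rw [ContinuousAt, Filter.tendsto_def]
  intro W hW
  obtain ⟨V, hVmem, hVcl, hVW⟩ := exists_mem_nhds_isClosed_subset hW
  have h1 : (fun s : S => f ↑s) ⁻¹' V ∈ 𝓝 z := hz hVmem
  obtain ⟨G₀, hG₀, hG₀sub⟩ := (mem_nhds_subtype S z _).1 h1
  have hzG : (z : Z) ∈ interior G₀ ∩ O := ⟨mem_interior_iff_mem_nhds.2 hG₀, hSO z.2⟩
  have hGo : IsOpen (interior G₀ ∩ O) := isOpen_interior.inter hO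
  have hGV : interior G₀ ∩ O ⊆ f ⁻¹' V := by
    intro y hy
    by_contra hyV
    obtain ⟨U, hUo, hUne, hUsub, hUim⟩ := hf y _ (hGo.mem_nhds hy) Vᶜ
      (hVcl.isOpen_compl.mem_nhds hyV)
    obtain ⟨u, hu⟩ := hUne
    obtain ⟨s, hsU, hsS⟩ := mem_closure_iff.1 (hd (hUsub hu).2) U hUo hu
    have hmem : (⟨s, hsS⟩ : S) ∈ Subtype.val ⁻¹' G₀ := show s ∈ G₀ from interior_subset (hUsub hsU).1
    have h2 : f s ∈ V := hG₀sub hmem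
    exact hUim ⟨s, hsU, rfl⟩ h2
  exact Filter.mem_of_superset (hGo.mem_nhds hzG)
    (fun y hy => hVW (hGV hy))


end Helpers

section Meagre


variable {Z : Type*} [TopologicalSpace Z]

lemma isMeagre_iff_seq {s : Set Z} :
    IsMeagre s ↔ ∃ F : ℕ → Set Z, (∀ n, IsNowhereDense (F n)) ∧ s ⊆ ⋃ n, F n := by
  rw [isMeagre_iff_countable_union_isNowhereDense]
  constructor
  · rintro ⟨S, hS1, hS2, hS3⟩
    have hne : (insert (∅ : Set Z) S).Nonempty := ⟨∅, mem_insert _ _⟩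
    obtain ⟨F, hF⟩ := (hS2.insert ∅).exists_eq_range hne
    refine ⟨F, ?_, ?_⟩
    · intro n
      have : F n ∈ insert (∅ : Set Z) S := hF ▸ mem_range_self n
      rcases this with h | h
      · rw [h]; exact isNowhereDense_empty
      · exact hS1 _ h
    · refine hS3.trans ?_
      intro x hx
      obtain ⟨t, ht, hxt⟩ := hx
      have : t ∈ range F := hF ▸ mem_insert_of_mem _ ht
      obtain ⟨n, rfl⟩ := this
      exact mem_iUnion.2 ⟨n, hxt⟩
  · rintro ⟨F, hF1, hF2⟩
    exact ⟨range F, by rintro t ⟨n, rfl⟩; exact hF1 n, countable_range F,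
      by rwa [sUnion_range]⟩

lemma IsMeagre.union' {s t : Set Z} (hs : IsMeagre s) (ht : IsMeagre t) :
    IsMeagre (s ∪ t) := by
  rw [IsMeagre, compl_union]; exact Filter.inter_mem hs ht

lemma banach_category (B : Set Z) (𝒰 : Set (Set Z))
    (hopen : ∀ U ∈ 𝒰, IsOpen U) (hm : ∀ U ∈ 𝒰, IsMeagre (B ∩ U)) :
    IsMeagre (B ∩ ⋃₀ 𝒰) := by
  classical
  set D : Set (Set (Set Z)) :=
    {𝒱 | (∀ V ∈ 𝒱, IsOpen V ∧ V.Nonempty ∧ ∃ U ∈ 𝒰, V ⊆ U) ∧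
      𝒱.Pairwise fun V W => V ∩ W = ∅} with hD
  have hzorn : ∀ c ⊆ D, IsChain (· ⊆ ·) c → ∃ ub ∈ D, ∀ s ∈ c, s ⊆ ub := by
    intro c hcD hchain
    refine ⟨⋃₀ c, ⟨?_, ?_⟩, fun s hs => subset_sUnion_of_mem hs⟩
    · rintro V ⟨𝒲, h𝒲, hV⟩
      exact (hcD h𝒲).1 V hV
    · intro V hV W hW hVW
      obtain ⟨𝒲₁, h𝒲₁, hV1⟩ := hV
      obtain ⟨𝒲₂, h𝒲₂, hW2⟩ := hW
      rcases eq_or_ne 𝒲₁ 𝒲₂ with rfl | hne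
      · exact (hcD h𝒲₁).2 hV1 hW2 hVW
      · rcases hchain h𝒲₁ h𝒲₂ hne with h | h
        · exact (hcD h𝒲₂).2 (h hV1) hW2 hVW
        · exact (hcD h𝒲₁).2 hV1 (h hW2) hVW
  obtain ⟨𝒱, h𝒱D, h𝒱max⟩ : ∃ 𝒱, 𝒱 ∈ D ∧ ∀ b ∈ D, 𝒱 ⊆ b → b ⊆ 𝒱 := by
    obtain ⟨m, hm⟩ := zorn_subset D hzorn
    exact ⟨m, hm.prop, fun b hb hmb => hm.2 hb hmb⟩
  -- maximality consequence
  have key : ∀ G : Set Z, IsOpen G → G.Nonempty → (∃ U ∈ 𝒰, G ⊆ U) →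
      (G ∩ ⋃₀ 𝒱).Nonempty := by
    intro G hGo hGne hGU
    by_contra hemp
    rw [not_nonempty_iff_eq_empty] at hemp
    have hins : insert G 𝒱 ∈ D := by
      constructor
      · rintro V (rfl | hV)
        · exact ⟨hGo, hGne, hGU⟩
        · exact h𝒱D.1 V hV
      · intro V hV W hW hVW
        rcases hV with rfl | hV
        · rcases hW with rfl | hW
          · exact absurd rfl hVW
          · have : W ⊆ ⋃₀ 𝒱 := subset_sUnion_of_mem hW
            exact subset_empty_iff.1 (hemp ▸ inter_subset_inter_right _ this)
        · rcases hW with rfl | hW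
          · have : V ⊆ ⋃₀ 𝒱 := subset_sUnion_of_mem hV
            rw [inter_comm]
            exact subset_empty_iff.1 (hemp ▸ inter_subset_inter_right _ this)
          · exact h𝒱D.2 hV hW hVW
    have hGin : G ∈ 𝒱 := h𝒱max _ hins (subset_insert _ _) (mem_insert _ _)
    obtain ⟨g, hg⟩ := hGne
    exact absurd hemp (by
      rw [← ne_eq, ← nonempty_iff_ne_empty]
      exact ⟨g, hg, subset_sUnion_of_mem hGin hg⟩)
  -- E nowhere dense
  have hE : IsNowhereDense (⋃₀ 𝒰 \ ⋃₀ 𝒱) := by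
    set E := ⋃₀ 𝒰 \ ⋃₀ 𝒱 with hEdef
    rw [IsNowhereDense, eq_empty_iff_forall_notMem]
    intro x hx
    set G := interior (closure E) with hG
    have hGo : IsOpen G := isOpen_interior
    have hGcl : G ⊆ closure E := interior_subset
    have h1 : (G ∩ E).Nonempty := by
      have : x ∈ closure E := hGcl hx
      exact (mem_closure_iff.1 this) G hGo hx
    obtain ⟨e, heG, heE⟩ := h1
    obtain ⟨U, hU𝒰, heU⟩ := heE.1
    have h2 : ((G ∩ U) ∩ ⋃₀ 𝒱).Nonempty :=
      key _ (hGo.inter (hopen U hU𝒰)) ⟨e, heG, heU⟩ ⟨U, hU𝒰, inter_subset_right⟩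
    obtain ⟨v, hvGU, V, hV𝒱, hvV⟩ := h2
    have h3 : (((G ∩ U) ∩ V) ∩ E).Nonempty := by
      have hvcl : v ∈ closure E := hGcl hvGU.1
      exact mem_closure_iff.1 hvcl _ ((hGo.inter (hopen U hU𝒰)).inter (h𝒱D.1 V hV𝒱).1)
        ⟨hvGU, hvV⟩
    obtain ⟨w, hw1, hw2⟩ := h3
    exact hw2.2 ⟨V, hV𝒱, hw1.2⟩
  -- families
  have hch : ∀ V : Set Z, ∃ F : ℕ → Set Z, (∀ n, IsNowhereDense (F n)) ∧
      (V ∈ 𝒱 → B ∩ V ⊆ ⋃ n, F n) := by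
    intro V
    by_cases hV : V ∈ 𝒱
    · obtain ⟨U, hU, hVU⟩ := (h𝒱D.1 V hV).2.2
      obtain ⟨F, hF1, hF2⟩ := isMeagre_iff_seq.1 ((hm U hU).mono
        (inter_subset_inter_right _ hVU))
      exact ⟨F, hF1, fun _ => hF2⟩
    · exact ⟨fun _ => ∅, fun _ => isNowhereDense_empty, fun h => absurd h hV⟩
  choose F hF1 hF2 using hch
  set M : ℕ → Set Z := fun n => ⋃ V ∈ 𝒱, closure (F V n) ∩ V with hM
  have hMnd : ∀ n, IsNowhereDense (M n) := by
    intro n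
    rw [IsNowhereDense, eq_empty_iff_forall_notMem]
    intro x hx
    set G := interior (closure (M n)) with hG
    have hGo : IsOpen G := isOpen_interior
    have hGcl : G ⊆ closure (M n) := interior_subset
    have h1 : (G ∩ M n).Nonempty := mem_closure_iff.1 (hGcl hx) G hGo hx
    obtain ⟨y, hyG, hyM⟩ := h1
    obtain ⟨V₀, hV₀, hyV₀⟩ : ∃ V₀ ∈ 𝒱, y ∈ closure (F V₀ n) ∩ V₀ := by
      rw [hM] at hyM; simp at hyM; tauto
    have hV₀o : IsOpen V₀ := (h𝒱D.1 V₀ hV₀).1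
    set H := (G ∩ V₀) \ closure (F V₀ n) with hH
    have hHo : IsOpen H := (hGo.inter hV₀o).sdiff isClosed_closure
    have hHne : H.Nonempty := by
      by_contra hemp
      rw [not_nonempty_iff_eq_empty, diff_eq_empty] at hemp
      have : G ∩ V₀ ⊆ interior (closure (F V₀ n)) :=
        (hGo.inter hV₀o).subset_interior_iff.2 hemp
      rw [hF1 V₀ n] at this
      exact absurd (this ⟨hyG, hyV₀.2⟩) (notMem_empty y)
    obtain ⟨h, hh⟩ := hHne
    have h2 : (H ∩ M n).Nonempty :=
      mem_closure_iff.1 (hGcl hh.1.1) H hHo hh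
    obtain ⟨w, hwH, hwM⟩ := h2
    obtain ⟨V, hV, hwV⟩ : ∃ V ∈ 𝒱, w ∈ closure (F V n) ∩ V := by rw [hM] at hwM; simp at hwM; tauto
    rcases eq_or_ne V V₀ with rfl | hne
    · exact hwH.2 hwV.1
    · have : w ∈ V ∩ V₀ := ⟨hwV.2, hwH.1.2⟩
      rw [h𝒱D.2 hV hV₀ hne] at this
      exact this
  -- cover
  have hcover : B ∩ ⋃₀ 𝒰 ⊆ (⋃ n, M n) ∪ (⋃₀ 𝒰 \ ⋃₀ 𝒱) := by
    rintro x ⟨hxB, hxU⟩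
    by_cases hx𝒱 : x ∈ ⋃₀ 𝒱
    · obtain ⟨V, hV, hxV⟩ := hx𝒱
      obtain ⟨n, hn⟩ := mem_iUnion.1 (hF2 V hV ⟨hxB, hxV⟩)
      exact Or.inl (mem_iUnion.2 ⟨n, mem_iUnion₂.2 ⟨V, hV, subset_closure hn, hxV⟩⟩)
    · exact Or.inr ⟨hxU, hx𝒱⟩
  exact (((isMeagre_iff_seq.2 ⟨M, hMnd, subset_refl _⟩).union' hE.isMeagre).mono hcover)


lemma dense_preimage_val {O S : Set Z} (hO : IsOpen O) (hS : Dense S) :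
    Dense (Subtype.val ⁻¹' S : Set ↥O) := by
  intro x
  rw [closure_subtype, Subtype.image_preimage_coe]
  exact hS.open_subset_closure_inter hO x.2

lemma isNowhereDense_image {O : Set Z} (hO : IsOpen O) {s : Set ↥O}
    (hs : IsNowhereDense s) : IsNowhereDense (Subtype.val '' s) := by
  rw [IsNowhereDense, eq_empty_iff_forall_notMem]
  intro x hx
  set G := interior (closure (Subtype.val '' s)) with hG
  have hGo : IsOpen G := isOpen_interior
  have hGcl : G ⊆ closure (Subtype.val '' s) := interior_subset
  obtain ⟨y, hyG, hys⟩ := mem_closure_iff.1 (hGcl hx) G hGo hx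
  have hyO : y ∈ O := by obtain ⟨a, _, rfl⟩ := hys; exact a.2
  have hTo : IsOpen (Subtype.val ⁻¹' G : Set ↥O) := hGo.preimage continuous_subtype_val
  have hTsub : (Subtype.val ⁻¹' G : Set ↥O) ⊆ closure s := by
    intro t ht
    rw [closure_subtype]
    exact hGcl ht
  have : (⟨y, hyO⟩ : ↥O) ∈ interior (closure s) :=
    interior_maximal hTsub hTo hyG
  rw [hs] at this
  exact this

lemma isMeagre_image {O : Set Z} (hO : IsOpen O) {s : Set ↥O}
    (hs : IsMeagre s) : IsMeagre (Subtype.val '' s) := by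
  obtain ⟨F, hF1, hF2⟩ := isMeagre_iff_seq.1 hs
  refine isMeagre_iff_seq.2 ⟨fun n => Subtype.val '' F n,
    fun n => isNowhereDense_image hO (hF1 n), ?_⟩
  rw [← image_iUnion]
  exact image_mono hF2

lemma dense_baire_of_locally_nonmeagre {B : Set Z}
    (h : ∀ V : Set Z, IsOpen V → V.Nonempty → ¬ IsMeagre (B ∩ V)) :
    Dense B ∧ BaireSpace ↥B := by
  have hBd : Dense B := by
    rw [dense_iff_inter_open]
    intro U hU hUne
    rcases eq_empty_or_nonempty (U ∩ B) with hemp | hne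
    · exact absurd (by rw [inter_comm] at hemp; rw [hemp]; exact IsMeagre.empty)
        (h U hU hUne)
    · exact hne
  refine ⟨hBd, ⟨fun gseq hopen hdense => ?_⟩⟩
  have hG : ∀ n, ∃ G : Set Z, IsOpen G ∧ Subtype.val ⁻¹' G = gseq n :=
    fun n => isOpen_induced_iff.1 (hopen n)
  choose G hGo hGeq using hG
  have hGd : ∀ n, Dense (G n) := by
    intro n
    rw [dense_iff_inter_open]
    intro V hV hVne
    obtain ⟨b, hbV, hbB⟩ := dense_iff_inter_open.1 hBd V hV hVne
    have hb' : (⟨b, hbB⟩ : ↥B) ∈ closure (gseq n) := hdense n _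
    obtain ⟨c, hc1, hc2⟩ := mem_closure_iff.1 hb' (Subtype.val ⁻¹' V)
      (hV.preimage continuous_subtype_val) hbV
    rw [← hGeq n] at hc2
    exact ⟨↑c, hc1, hc2⟩
  rw [dense_iff_inter_open]
  intro U hU hUne
  obtain ⟨W, hWo, hWeq⟩ := isOpen_induced_iff.1 hU
  obtain ⟨u, hu⟩ := hUne
  have hWne : (W ∩ B).Nonempty := ⟨↑u, by rw [← hWeq] at hu; exact hu, u.2⟩
  have hK : IsMeagre (⋃ n, (G n)ᶜ) := by
    refine isMeagre_iUnion (fun n => ?_)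
    have : IsNowhereDense (G n)ᶜ := by
      rw [IsNowhereDense, IsClosed.closure_eq (hGo n).isClosed_compl,
        interior_compl, (hGd n).closure_eq, compl_univ]
    exact this.isMeagre
  have hBW : ¬ IsMeagre (B ∩ W) := h W hWo ⟨hWne.choose, hWne.choose_spec.1⟩
  have hsub : ¬ (B ∩ W ⊆ ⋃ n, (G n)ᶜ) := fun hsub => hBW (hK.mono hsub)
  rw [not_subset] at hsub
  obtain ⟨z, ⟨hzB, hzW⟩, hzK⟩ := hsub
  rw [mem_iUnion] at hzK
  push_neg at hzK
  refine ⟨⟨z, hzB⟩, ?_, ?_⟩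
  · rw [← hWeq]; exact hzW
  · rw [mem_iInter]
    intro n
    rw [← hGeq n]
    simpa using hzK n

end Meagre

/-- Let `𝒞` (= `P`) be a class of Baire spaces and `f : C → X` a
quasicontinuous map from a nonempty member of `𝒞` to a `𝒞`-Piotrowski regular space `X`.
(1) If `𝒞` is closed under open subspaces then `C(f)` is dense;
(2) if `𝒞` is closed under dense `Gδ`-subspaces then `C(f)` is not meager;
(3) if `𝒞` is closed under open subspaces and dense `Gδ`-subspaces then `C(f)` is a dense
    Baire subspace;
(4) if `𝒞` is closed under open subspaces and dense Baire subspaces then `C(f)` is comeager. -/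
theorem piotrowski_continuityPoints (P : SpaceClass.{u}) (hB : IsBaireClass P)
    (X : Type v) [TopologicalSpace X] [RegularSpace X] (hX : IsPiotrowskiFor P X)
    (C : Type u) [tC : TopologicalSpace C] (hC : P C tC) (hne : Nonempty C)
    (f : C → X) (hf : QuasiContinuous f) :
    (ClosedUnderOpenSubspaces P → Dense (ContinuityPoints f)) ∧
    (ClosedUnderDenseGdelta P → ¬ IsMeagre (ContinuityPoints f)) ∧
    (ClosedUnderOpenSubspaces P → ClosedUnderDenseGdelta P →
      Dense (ContinuityPoints f) ∧ BaireSpace ↥(ContinuityPoints f)) ∧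
    (ClosedUnderOpenSubspaces P → ClosedUnderDenseBaire P →
      ContinuityPoints f ∈ residual C) := by
  classical
  haveI := hne
  have M1 : ∀ O : Set C, IsOpen O → ∀ T : Set ↥O, P ↥T inferInstance → T.Nonempty →
      Dense T → ∃ t : ↥T, ContinuousAt f ((t : ↥O) : C) := by
    intro O hO T hPT hTne hTd
    have hg : QuasiContinuous (fun s : ↥O => f ↑s) :=
      qc_restrict f hf hO subset_rfl subset_closure
    have hg' : QuasiContinuous (fun s : ↥T => (fun s : ↥O => f ↑s) ↑s) :=
      qc_restrict _ hg isOpen_univ (subset_univ T) (fun x _ => hTd x)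
    obtain ⟨t, ht⟩ := hX ↥T hPT ⟨⟨hTne.choose, hTne.choose_spec⟩⟩ _ hg'
    have h1 : ContinuousAt (fun s : ↥O => f ↑s) ↑t :=
      continuousAt_of_restrict _ hg isOpen_univ (subset_univ T) (fun x _ => hTd x) t ht
    exact ⟨t, continuousAt_of_restrict f hf hO subset_rfl subset_closure (↑t) h1⟩
  have M0 : ∀ O : Set C, IsOpen O → O.Nonempty → P ↥O inferInstance →
      ∃ z ∈ O, ContinuousAt f z := by
    intro O hO hOne hPO
    have hg : QuasiContinuous (fun s : ↥O => f ↑s) :=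
      qc_restrict f hf hO subset_rfl subset_closure
    obtain ⟨z, hz⟩ := hX ↥O hPO ⟨⟨hOne.choose, hOne.choose_spec⟩⟩ _ hg
    exact ⟨↑z, z.2, continuousAt_of_restrict f hf hO subset_rfl subset_closure z hz⟩
  have part1 : ClosedUnderOpenSubspaces P → Dense (ContinuityPoints f) := by
    intro hOS
    rw [dense_iff_inter_open]
    intro U hU hUne
    obtain ⟨z, hzU, hz⟩ := M0 U hU hUne (hOS C hC U hU)
    exact ⟨z, hzU, hz⟩
  have part2 : ClosedUnderDenseGdelta P → ¬ IsMeagre (ContinuityPoints f) := by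
    intro hGd hMg
    haveI := hB C hC
    obtain ⟨t, hts, htGδ, htd⟩ := mem_residual.1 hMg
    have hPt := hGd C hC t htd htGδ
    have hg' : QuasiContinuous (fun s : ↥t => f ↑s) :=
      qc_restrict f hf isOpen_univ (subset_univ t) (fun x _ => htd x)
    obtain ⟨z, hz⟩ := hX ↥t hPt ⟨⟨htd.nonempty.choose, htd.nonempty.choose_spec⟩⟩ _ hg'
    have hcz : ContinuousAt f ↑z :=
      continuousAt_of_restrict f hf isOpen_univ (subset_univ t) (fun x _ => htd x) z hz
    exact hts z.2 hcz
  have part3 : ClosedUnderOpenSubspaces P → ClosedUnderDenseGdelta P →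
      Dense (ContinuityPoints f) ∧ BaireSpace ↥(ContinuityPoints f) := by
    intro hOS hGd
    have hA : Dense (ContinuityPoints f) := part1 hOS
    refine ⟨hA, ⟨fun gseq hopen hdense => ?_⟩⟩
    have hG : ∀ n, ∃ G : Set C, IsOpen G ∧ Subtype.val ⁻¹' G = gseq n :=
      fun n => isOpen_induced_iff.1 (hopen n)
    choose G hGo hGeq using hG
    have hGd' : ∀ n, Dense (G n) := by
      intro n
      rw [dense_iff_inter_open]
      intro V hV hVne
      obtain ⟨b, hbV, hbA⟩ := dense_iff_inter_open.1 hA V hV hVne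
      obtain ⟨c, hc1, hc2⟩ := mem_closure_iff.1 (hdense n ⟨b, hbA⟩)
        (Subtype.val ⁻¹' V) (hV.preimage continuous_subtype_val) hbV
      rw [← hGeq n] at hc2
      exact ⟨↑c, hc1, hc2⟩
    haveI := hB C hC
    have hSd : Dense (⋂ n, G n) := dense_iInter_of_isOpen hGo hGd'
    rw [dense_iff_inter_open]
    intro U hU hUne
    obtain ⟨W, hWo, hWeq⟩ := isOpen_induced_iff.1 hU
    obtain ⟨u, hu⟩ := hUne
    have huW : (u : C) ∈ W := by rw [← hWeq] at hu; exact hu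
    have hPW := hOS C hC W hWo
    have hTd : Dense (Subtype.val ⁻¹' (⋂ n, G n) : Set ↥W) := dense_preimage_val hWo hSd
    have hTGδ : IsGδ (Subtype.val ⁻¹' (⋂ n, G n) : Set ↥W) := by
      rw [preimage_iInter]
      exact IsGδ.iInter_of_isOpen (fun n => (hGo n).preimage continuous_subtype_val)
    have hPT := hGd ↥W hPW _ hTd hTGδ
    haveI : Nonempty ↥W := ⟨⟨u, huW⟩⟩
    obtain ⟨t, ht⟩ := M1 W hWo _ hPT hTd.nonempty hTd
    have htS : ((t : ↥W) : C) ∈ ⋂ n, G n := t.2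
    refine ⟨⟨((t : ↥W) : C), ht⟩, ?_, ?_⟩
    · rw [← hWeq]; exact (t : ↥W).2
    · rw [mem_iInter]
      intro n
      rw [← hGeq n]
      exact mem_iInter.1 htS n
  refine ⟨part1, part2, part3, ?_⟩
  intro hOS hDB
  suffices hM : IsMeagre (ContinuityPoints f)ᶜ by
    rw [IsMeagre, compl_compl] at hM; exact hM
  set B := (ContinuityPoints f)ᶜ with hBdef
  set 𝒰 := {U : Set C | IsOpen U ∧ IsMeagre (B ∩ U)} with h𝒰
  have hcat := banach_category B 𝒰 (fun U hU => hU.1) (fun U hU => hU.2)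
  have hWd : Dense (⋃₀ 𝒰) := by
    by_contra hnd
    rw [dense_iff_inter_open] at hnd
    push_neg at hnd
    obtain ⟨O, hOo, hOne, hOdisj⟩ := hnd
    have hloc : ∀ V : Set C, IsOpen V → V ⊆ O → V.Nonempty → ¬ IsMeagre (B ∩ V) := by
      intro V hVo hVO hVne hmg
      have hV𝒰 : V ∈ 𝒰 := ⟨hVo, hmg⟩
      obtain ⟨v, hv⟩ := hVne
      have : v ∈ O ∩ ⋃₀ 𝒰 := ⟨hVO hv, V, hV𝒰, hv⟩
      rw [hOdisj] at this; exact this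
    have hyp : ∀ V₁ : Set ↥O, IsOpen V₁ → V₁.Nonempty →
        ¬ IsMeagre ((Subtype.val ⁻¹' B : Set ↥O) ∩ V₁) := by
      intro V₁ hV₁o hV₁ne hmg
      obtain ⟨W, hWo, hWeq⟩ := isOpen_induced_iff.1 hV₁o
      have him := isMeagre_image hOo hmg
      have heq : Subtype.val '' ((Subtype.val ⁻¹' B : Set ↥O) ∩ V₁) = O ∩ (B ∩ W) := by
        rw [← hWeq, ← preimage_inter, Subtype.image_preimage_coe]
      rw [heq] at him
      obtain ⟨v, hv⟩ := hV₁ne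
      have hvW : (v : C) ∈ W := by rw [← hWeq] at hv; exact hv
      refine hloc (W ∩ O) (hWo.inter hOo) inter_subset_right ⟨↑v, hvW, v.2⟩ ?_
      exact him.mono (fun x (hx : x ∈ B ∩ (W ∩ O)) => (⟨hx.2.2, hx.1, hx.2.1⟩ : x ∈ O ∩ (B ∩ W)))
    obtain ⟨hBd1, hBaire1⟩ := dense_baire_of_locally_nonmeagre hyp
    have hPO := hOS C hC O hOo
    have hPB := hDB ↥O hPO _ hBd1 hBaire1
    haveI : Nonempty ↥O := ⟨⟨hOne.choose, hOne.choose_spec⟩⟩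
    obtain ⟨t, ht⟩ := M1 O hOo _ hPB hBd1.nonempty hBd1
    exact t.2 ht
  have hWo : IsOpen (⋃₀ 𝒰) := isOpen_sUnion (fun U hU => hU.1)
  have hndc : IsNowhereDense (⋃₀ 𝒰)ᶜ := by
    rw [IsNowhereDense, IsClosed.closure_eq hWo.isClosed_compl, interior_compl,
      hWd.closure_eq, compl_univ]
  have hsub : B ⊆ (B ∩ ⋃₀ 𝒰) ∪ (⋃₀ 𝒰)ᶜ := by
    intro x hx
    by_cases hxW : x ∈ ⋃₀ 𝒰
    · exact Or.inl ⟨hx, hxW⟩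
    · exact Or.inr hxW
  exact (hcat.union' hndc.isMeagre).mono hsub
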